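/- For every integer k ≥ 1, a tree T has pathwidth at most k if and only if T contains a path P such that the forest T − V(P) has pathwidth at most k − 1. -/
import Mathlib


/-- `B` is a path-partition of `G` indexed by `Fin m`: the bags partition the
vertex set and every edge joins vertices in bags with indices differing by at most 1. -/
def IsPathPartition {V : Type*} (G : SimpleGraph V) {m : ℕ} (B : Fin m → Finset V) : Prop :=
  (∀ v : V, ∃! i : Fin m, v ∈ B i) ∧
  ∀ ⦃v w : V⦄, G.Adj v w → ∀ ⦃i j : Fin m⦄, v ∈ B i → w ∈ B j →
    (i.val : ℤ) - j.val ≤ 1 ∧ (j.val : ℤ) - i.val ≤ 1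

/-- `B` is a path-decomposition of the part of `G` induced on `U`:
bags lie in `U`, every edge of `G` inside `U` is in a common bag, every vertex
of `U` is in some bag, and the bags containing a given vertex are consecutive. -/
def IsPathDecompOn {V : Type*} (G : SimpleGraph V) (U : Set V) {n : ℕ}
    (B : Fin n → Finset V) : Prop :=
  (∀ i, ↑(B i) ⊆ U) ∧
  (∀ ⦃v w : V⦄, G.Adj v w → v ∈ U → w ∈ U → ∃ i, v ∈ B i ∧ w ∈ B i) ∧
  (∀ v ∈ U, ∃ i, v ∈ B i) ∧
  (∀ (v : V) (i j l : Fin n), i ≤ j → j ≤ l → v ∈ B i → v ∈ B l → v ∈ B j)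

/-- The part of `G` induced on `U` has pathwidth at most `k`. -/
def PWleOn {V : Type*} (G : SimpleGraph V) (U : Set V) (k : ℕ) : Prop :=
  ∃ (n : ℕ) (B : Fin n → Finset V), 0 < n ∧ IsPathDecompOn G U B ∧
    ∀ i, (B i).card ≤ k + 1

/-- `G` has pathwidth at most `k`. -/
def PWle {V : Type*} (G : SimpleGraph V) (k : ℕ) : Prop :=
  PWleOn G Set.univ k

/-- `B` is a `T`-partition of `G`: the bags (indexed by the vertices of `T`)
partition `V(G)` and every edge of `G` joins vertices in the same bag or in
bags indexed by adjacent nodes of `T`. -/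
def IsTreePartition {ι V : Type*} (T : SimpleGraph ι) (G : SimpleGraph V)
    (B : ι → Finset V) : Prop :=
  (∀ v : V, ∃! x : ι, v ∈ B x) ∧
  ∀ ⦃v w : V⦄, G.Adj v w → ∀ ⦃x y : ι⦄, v ∈ B x → w ∈ B y → x = y ∨ T.Adj x y

/-- `C` is a tree-decomposition of `G` indexed by the tree `T`: every edge lies
in some bag and for each vertex the nodes whose bags contain it induce a
non-empty connected subgraph of `T`. -/
def IsTreeDecomp {ι V : Type*} (T : SimpleGraph ι) (G : SimpleGraph V)
    (C : ι → Finset V) : Prop :=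
  (∀ ⦃v w : V⦄, G.Adj v w → ∃ x, v ∈ C x ∧ w ∈ C x) ∧
  (∀ v : V, ∃ x, v ∈ C x) ∧
  (∀ v : V, (T.induce {x : ι | v ∈ C x}).Connected)

/-- `G` has maximum degree at most `d`. -/
def MaxDegLE {V : Type*} (G : SimpleGraph V) (d : ℕ) : Prop :=
  ∀ v : V, (G.neighborSet v).ncard ≤ d

/-- The graph obtained from `G` by deleting the vertices in `S`. -/
def delv {V : Type*} (G : SimpleGraph V) (S : Set V) : SimpleGraph V :=
  SimpleGraph.fromRel (fun a b => G.Adj a b ∧ a ∉ S ∧ b ∉ S)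

open SimpleGraph Walk

namespace Stmt3Aux

attribute [local instance] Classical.propDecidable Classical.decEq

variable {V : Type*} {T : SimpleGraph V}

lemma getVert_mem_support' {u v : V} (p : T.Walk u v) (t : ℕ) :
    p.getVert t ∈ p.support := by
  by_cases ht : t ≤ p.length
  · exact Walk.mem_support_iff_exists_getVert.mpr ⟨t, rfl, ht⟩
  · rw [Walk.getVert_of_length_le p (by omega)]
    exact Walk.end_mem_support p

lemma getVert_injOn {u v : V} (p : T.Walk u v) :
    p.IsPath → ∀ a b : ℕ, a ≤ p.length → b ≤ p.length → p.getVert a = p.getVert b → a = b := by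
  induction p with
  | nil => intro _ a b ha hb _; simp [Walk.length_nil] at ha hb; omega
  | @cons u w v h q ih =>
    intro hp a b ha hb hab
    rw [Walk.cons_isPath_iff] at hp
    match a, b with
    | 0, 0 => rfl
    | 0, b + 1 =>
      exfalso
      rw [Walk.getVert_zero, Walk.getVert_cons_succ] at hab
      exact hp.2 (hab ▸ getVert_mem_support' q b)
    | a + 1, 0 =>
      exfalso
      rw [Walk.getVert_zero, Walk.getVert_cons_succ] at hab
      exact hp.2 (hab ▸ getVert_mem_support' q a)
    | a + 1, b + 1 =>
      rw [Walk.getVert_cons_succ, Walk.getVert_cons_succ] at hab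
      have := ih hp.1 a b (by simp [Walk.length_cons] at ha; omega)
        (by simp [Walk.length_cons] at hb; omega) hab
      omega

lemma exists_subpath {u v a b : V} (p : T.Walk u v) (hp : p.IsPath)
    (ha : a ∈ p.support) (hb : b ∈ p.support) :
    ∃ q : T.Walk a b, q.IsPath ∧ ∀ z ∈ q.support, z ∈ p.support := by
  obtain ⟨q1, r1, rfl⟩ := Walk.mem_support_iff_exists_append.mp ha
  rcases (Walk.mem_support_append_iff _ _).mp hb with hb1 | hb2
  · obtain ⟨q2, r2, rfl⟩ := Walk.mem_support_iff_exists_append.mp hb1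
    refine ⟨r2.reverse, (hp.of_append_left.of_append_right).reverse, fun z hz => ?_⟩
    rw [Walk.support_reverse, List.mem_reverse] at hz
    exact Walk.subset_support_append_left _ _ (Walk.subset_support_append_right _ _ hz)
  · obtain ⟨q2, r2, rfl⟩ := Walk.mem_support_iff_exists_append.mp hb2
    refine ⟨q2, hp.of_append_right.of_append_left, fun z hz => ?_⟩
    exact Walk.subset_support_append_right _ _ (Walk.subset_support_append_left _ _ hz)

lemma adj_mem_edges (hac : T.IsAcyclic) {u v : V} (p : T.Walk u v) :
    p.IsPath → ∀ {x y : V}, T.Adj x y → x ∈ p.support → y ∈ p.support → s(x, y) ∈ p.edges := by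
  classical
  induction p with
  | nil =>
    intro _ x y hxy hx hy
    simp only [Walk.support_nil, List.mem_singleton] at hx hy
    subst hx; subst hy
    exact absurd hxy (T.irrefl)
  | @cons a b c hab q ih =>
    intro hp x y hxy hx hy
    rw [Walk.cons_isPath_iff] at hp
    obtain ⟨hq, haq⟩ := hp
    have key : ∀ {y' : V}, T.Adj a y' → y' ∈ q.support → s(a, y') ∈ (Walk.cons hab q).edges := by
      intro y' hxy' hy'
      by_cases hyb : y' = b
      · subst hyb
        simp [Walk.edges_cons]
      · exfalso
        have hay : a ≠ y' := fun h => haq (h ▸ hy')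
        have h1 : (Walk.cons hxy' Walk.nil : T.Walk a y').IsPath :=
          Walk.IsPath.nil.cons (by simpa using hay)
        have h2 : (Walk.cons hab (q.takeUntil y' hy')).IsPath :=
          (hq.takeUntil hy').cons (fun hc => haq (Walk.support_takeUntil_subset _ _ hc))
        have hun := SimpleGraph.isAcyclic_iff_path_unique.mp hac ⟨_, h1⟩ ⟨_, h2⟩
        have hwalks : (Walk.cons hxy' Walk.nil : T.Walk a y') = Walk.cons hab (q.takeUntil y' hy') :=
          congrArg Subtype.val hun
        have hsupp := congrArg Walk.support hwalks
        simp only [Walk.support_cons, Walk.support_nil] at hsupp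
        have : (q.takeUntil y' hy').support = [y'] := by
          injection hsupp with e1 e2
          exact e2.symm
        have hb' : (q.takeUntil y' hy').support = b :: (q.takeUntil y' hy').support.tail :=
          Walk.support_eq_cons _
        rw [this] at hb'
        injection hb' with hb'' _
        exact hyb hb''
    simp only [Walk.support_cons, List.mem_cons] at hx hy
    rcases hx with hx | hx <;> rcases hy with hy | hy
    · subst hx; subst hy; exact absurd hxy (T.irrefl)
    · subst hx; exact key hxy hy
    · subst hy; rw [Sym2.eq_swap]; exact key hxy.symm hx
    · rw [Walk.edges_cons]
      exact List.mem_cons_of_mem _ (ih hq hxy hx hy)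

lemma mem_edges_getVert {u v : V} (p : T.Walk u v) {x y : V} (h : s(x, y) ∈ p.edges) :
    ∃ t, t < p.length ∧ ((p.getVert t = x ∧ p.getVert (t + 1) = y) ∨
      (p.getVert t = y ∧ p.getVert (t + 1) = x)) := by
  induction p with
  | nil => simp at h
  | @cons a b c hab q ih =>
    rw [Walk.edges_cons, List.mem_cons] at h
    rcases h with h | h
    · refine ⟨0, by simp [Walk.length_cons], ?_⟩
      rw [Sym2.eq_iff] at h
      simp only [Walk.getVert_zero, Walk.getVert_cons_succ]
      rcases h with ⟨h1, h2⟩ | ⟨h1, h2⟩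
      · exact Or.inl ⟨h1.symm, h2.symm⟩
      · exact Or.inr ⟨h2.symm, h1.symm⟩
    · obtain ⟨t, ht, h'⟩ := ih h
      refine ⟨t + 1, by simp [Walk.length_cons]; omega, ?_⟩
      simpa [Walk.getVert_cons_succ] using h'

/-- `x` "attaches" to position `t` of the walk `p`: there is a walk from `x`
avoiding the support of `p` ending at a vertex adjacent to `p.getVert t`. -/
def AttachAt (T : SimpleGraph V) {u v : V} (p : T.Walk u v) (x : V) (t : ℕ) : Prop :=
  t ≤ p.length ∧ ∃ y, T.Adj y (p.getVert t) ∧ ∃ w : T.Walk x y, ∀ z ∈ w.support, z ∉ p.support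

lemma attachAt_unique (hT : T.IsTree) {u v : V} {p : T.Walk u v} (hp : p.IsPath)
    {x : V} {t1 t2 : ℕ} (h1 : AttachAt T p x t1) (h2 : AttachAt T p x t2) : t1 = t2 := by
  obtain ⟨ht1, y1, hy1, w1, hw1⟩ := h1
  obtain ⟨ht2, y2, hy2, w2, hw2⟩ := h2
  have hwk : ∀ z ∈ (w1.reverse.append w2).support, z ∉ p.support := by
    intro z hz
    rcases (Walk.mem_support_append_iff _ _).mp hz with h | h
    · exact hw1 z (by rwa [Walk.support_reverse, List.mem_reverse] at h)
    · exact hw2 z h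
  have hg : p.getVert t1 = p.getVert t2 := by
    by_contra hne
    have ha : p.getVert t1 ∈ p.support := getVert_mem_support' p t1
    have hb : p.getVert t2 ∈ p.support := getVert_mem_support' p t2
    set w2' := ((w1.reverse.append w2).append (Walk.cons hy2 Walk.nil)).toPath with hw2'def
    have hsub : (w2' : T.Walk y1 (p.getVert t2)).support ⊆
        ((w1.reverse.append w2).append (Walk.cons hy2 Walk.nil)).support :=
      Walk.support_toPath_subset _
    have hw2s : ∀ z ∈ (w2' : T.Walk y1 (p.getVert t2)).support,
        z ∉ p.support ∨ z = p.getVert t2 := by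
      intro z hz
      rcases (Walk.mem_support_append_iff _ _).mp (hsub hz) with h | h
      · exact Or.inl (hwk z h)
      · simp only [Walk.support_cons, Walk.support_nil, List.mem_cons,
          List.mem_singleton, List.not_mem_nil, or_false] at h
        rcases h with h | h
        · exact Or.inl (hw2 z (h ▸ Walk.end_mem_support w2))
        · exact Or.inr h
    have haw : p.getVert t1 ∉ (w2' : T.Walk y1 (p.getVert t2)).support := by
      intro h
      rcases hw2s _ h with h' | h'
      · exact h' ha
      · exact hne h'
    have hP1 : (Walk.cons hy1.symm (w2' : T.Walk y1 (p.getVert t2))).IsPath :=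
      w2'.prop.cons haw
    obtain ⟨q, hq, hqs⟩ := exists_subpath p hp ha hb
    have hun := (SimpleGraph.isAcyclic_iff_path_unique.mp hT.IsAcyclic) ⟨_, hP1⟩ ⟨q, hq⟩
    have hwalks : Walk.cons hy1.symm (w2' : T.Walk y1 (p.getVert t2)) = q :=
      congrArg Subtype.val hun
    have hy1q : y1 ∈ q.support := by
      rw [← hwalks]
      simp only [Walk.support_cons, List.mem_cons]
      exact Or.inr (Walk.start_mem_support _)
    exact hw1 y1 (Walk.end_mem_support w1) (hqs y1 hy1q)
  exact getVert_injOn p hp t1 t2 ht1 ht2 hg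

lemma attachAt_exists (hT : T.IsTree) {u v : V} {p : T.Walk u v} {x : V} (hx : x ∉ p.support) :
    ∃ t, AttachAt T p x t := by
  have hr : T.Reachable x u := hT.isConnected.preconnected x u
  suffices h : ∀ {x' c : V} (w : T.Walk x' c), x' ∉ p.support → c ∈ p.support →
      ∃ t, AttachAt T p x' t by
    exact hr.elim fun w => h w hx (Walk.start_mem_support p)
  intro x' c w
  induction w with
  | nil => intro hx' hc; exact absurd hc hx'
  | @cons x'' z c' hadj w' ih =>
    intro hx' hc
    by_cases hz : z ∈ p.support
    · obtain ⟨t, hgt, ht⟩ := Walk.mem_support_iff_exists_getVert.mp hz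
      exact ⟨t, ht, x'', by rwa [hgt], Walk.nil, by simpa using hx'⟩
    · obtain ⟨t, ht, y, hy, w'', hw''⟩ := ih hz hc
      refine ⟨t, ht, y, hy, Walk.cons hadj w'', ?_⟩
      intro zz hzz
      simp only [Walk.support_cons, List.mem_cons] at hzz
      rcases hzz with h | h
      · exact h ▸ hx'
      · exact hw'' zz h

/-- The position of `p` that `x` attaches to. -/
noncomputable def attach (T : SimpleGraph V) {u v : V} (p : T.Walk u v) (x : V) : ℕ :=
  if h : ∃ t, AttachAt T p x t then h.choose else 0

lemma attach_spec (hT : T.IsTree) {u v : V} {p : T.Walk u v} {x : V} (hx : x ∉ p.support) :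
    AttachAt T p x (attach T p x) := by
  have h := attachAt_exists hT hx
  rw [attach, dif_pos h]
  exact h.choose_spec

lemma attach_eq (hT : T.IsTree) {u v : V} {p : T.Walk u v} (hp : p.IsPath) {x : V} {t : ℕ}
    (h : AttachAt T p x t) : attach T p x = t := by
  have hex : ∃ t, AttachAt T p x t := ⟨t, h⟩
  rw [attach, dif_pos hex]
  exact attachAt_unique hT hp hex.choose_spec h

lemma attach_adj (hT : T.IsTree) {u v : V} {p : T.Walk u v} (hp : p.IsPath) {x y : V}
    (hx : x ∉ p.support) (hy : y ∉ p.support) (hxy : T.Adj x y) :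
    attach T p x = attach T p y := by
  obtain ⟨ht, y', hy', w, hw⟩ := attach_spec hT hy
  refine attach_eq hT hp ⟨ht, y', hy', Walk.cons hxy w, ?_⟩
  intro z hz
  simp only [Walk.support_cons, List.mem_cons] at hz
  rcases hz with h | h
  · exact h ▸ hx
  · exact hw z h

lemma attach_adj_getVert (hT : T.IsTree) {u v : V} {p : T.Walk u v} (hp : p.IsPath) {x : V}
    {t : ℕ} (hx : x ∉ p.support) (ht : t ≤ p.length) (hxy : T.Adj x (p.getVert t)) :
    attach T p x = t :=
  attach_eq hT hp ⟨ht, x, hxy, Walk.nil, by simpa using hx⟩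

lemma attach_le (hT : T.IsTree) {u v : V} {p : T.Walk u v} {x : V} (hx : x ∉ p.support) :
    attach T p x ≤ p.length := (attach_spec hT hx).1

lemma div_block {a : ℕ} (ha : 0 < a) {q r t : ℕ} (hr : r < a)
    (h1 : t * a ≤ q * a + r + 1) (h2 : q * a + r ≤ t * a + (a - 1)) :
    q = t ∨ (q + 1 = t ∧ r = a - 1) := by
  rcases Nat.lt_trichotomy q t with h | h | h
  · right
    have h3 : q * a + a ≤ t * a := by rw [← Nat.succ_mul]; exact Nat.mul_le_mul_right a h
    have h4 : q + 1 = t := by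
      by_contra hne
      have h5 : (q + 2) * a ≤ t * a := Nat.mul_le_mul_right a (by omega)
      have h6 : (q + 2) * a = q * a + a + a := by ring
      omega
    exact ⟨h4, by omega⟩
  · exact Or.inl h
  · exfalso
    have h3 : t * a + a ≤ q * a := by rw [← Nat.succ_mul]; exact Nat.mul_le_mul_right a h
    omega

/-- Bags for the path decomposition built from a path `p` and a decomposition `C`
of the rest of the tree. -/
noncomputable def bag (T : SimpleGraph V) {u v : V} (p : T.Walk u v) {m : ℕ}
    (C : Fin m → Finset V) (t j : ℕ) : Finset V :=
  if h : j < m then (C ⟨j, h⟩).filter (fun x => attach T p x = t) ∪ {p.getVert t}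
  else {p.getVert t, p.getVert (t + 1)}

lemma mem_bag_not_supp {u v : V} {p : T.Walk u v} {m : ℕ} {C : Fin m → Finset V}
    {x : V} (hx : x ∉ p.support) (t j : ℕ) :
    x ∈ bag T p C t j ↔ ∃ h : j < m, x ∈ C ⟨j, h⟩ ∧ attach T p x = t := by
  rw [bag]
  split_ifs with hj
  · simp only [Finset.mem_union, Finset.mem_filter, Finset.mem_singleton]
    constructor
    · rintro (⟨h1, h2⟩ | h1)
      · exact ⟨hj, h1, h2⟩
      · exact absurd (show x ∈ p.support by rw [h1]; exact getVert_mem_support' p t) hx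
    · rintro ⟨h, h1, h2⟩
      exact Or.inl ⟨h1, h2⟩
  · simp only [Finset.mem_insert, Finset.mem_singleton]
    constructor
    · rintro (h1 | h1) <;>
        exact absurd (show x ∈ p.support by rw [h1]; exact getVert_mem_support' p _) hx
    · rintro ⟨h, -⟩
      exact absurd h hj

lemma getVert_mem_bag {u v : V} {p : T.Walk u v} {m : ℕ} {C : Fin m → Finset V}
    (hC : ∀ j, ↑(C j) ⊆ {x : V | x ∉ p.support}) (hp : p.IsPath) {t t' : ℕ} (j : ℕ)
    (ht : t ≤ p.length) (ht' : t' ≤ p.length) :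
    p.getVert t ∈ bag T p C t' j ↔ (t = t' ∨ (¬ j < m ∧ t = t' + 1)) := by
  have hginj := getVert_injOn p hp
  rw [bag]
  split_ifs with hj
  · simp only [Finset.mem_union, Finset.mem_filter, Finset.mem_singleton]
    constructor
    · rintro (⟨h1, -⟩ | h1)
      · exact absurd (getVert_mem_support' p t) (hC _ h1)
      · exact Or.inl (hginj t t' ht ht' h1)
    · rintro (h | ⟨hjm, -⟩)
      · exact Or.inr (by rw [h])
      · exact absurd hj hjm
  · simp only [Finset.mem_insert, Finset.mem_singleton]
    constructor
    · rintro (h1 | h1)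
      · exact Or.inl (hginj t t' ht ht' h1)
      · by_cases hL' : t' < p.length
        · exact Or.inr ⟨hj, hginj t (t' + 1) ht (by omega) h1⟩
        · have he : p.getVert (t' + 1) = p.getVert t' := by
            rw [Walk.getVert_of_length_le p (by omega : p.length ≤ t' + 1),
              Walk.getVert_of_length_le p (by omega : p.length ≤ t')]
          exact Or.inl (hginj t t' ht ht' (h1.trans he))
    · rintro (h | ⟨-, h⟩)
      · exact Or.inl (by rw [h])
      · exact Or.inr (by rw [h])

lemma card_bag_le {u v : V} {p : T.Walk u v} {m : ℕ} {C : Fin m → Finset V} {k : ℕ}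
    (hk : 1 ≤ k) (hcard : ∀ j, (C j).card ≤ k) (t j : ℕ) :
    (bag T p C t j).card ≤ k + 1 := by
  rw [bag]
  split_ifs with hj
  · refine le_trans (Finset.card_union_le _ _) ?_
    have h1 := Finset.card_filter_le (C ⟨j, hj⟩) (fun x => attach T p x = t)
    have h2 := hcard ⟨j, hj⟩
    simp only [Finset.card_singleton]
    omega
  · refine le_trans (Finset.card_insert_le _ _) ?_
    simp only [Finset.card_singleton]
    omega

lemma walk_meets_bag {n : ℕ} {B : Fin n → Finset V}
    (hB4 : ∀ (v : V) (i j l : Fin n), i ≤ j → j ≤ l → v ∈ B i → v ∈ B l → v ∈ B j)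
    (hB2 : ∀ ⦃x y : V⦄, T.Adj x y → ∃ i, x ∈ B i ∧ y ∈ B i) (i : Fin n) :
    ∀ {x y : V} (w : T.Walk x y) {j l : Fin n}, x ∈ B j → y ∈ B l → j ≤ i → i ≤ l →
      ∃ z ∈ w.support, z ∈ B i := by
  intro x y w
  induction w with
  | nil =>
    intro j l hx hy hj hl
    exact ⟨_, Walk.start_mem_support _, hB4 _ j i l hj hl hx hy⟩
  | @cons a b c hadj w' ih =>
    intro j l hx hy hj hl
    obtain ⟨cc, hxc, hzc⟩ := hB2 hadj
    by_cases hci : i ≤ cc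
    · exact ⟨a, Walk.start_mem_support _, hB4 a j i cc hj hci hx hxc⟩
    · obtain ⟨z, hz, hzB⟩ := ih hzc hy (le_of_lt (not_le.mp hci)) hl
      exact ⟨z, by simp only [Walk.support_cons, List.mem_cons]; exact Or.inr hz, hzB⟩

end Stmt3Aux

open SimpleGraph Walk Stmt3Aux

/-- For every integer `k ≥ 1`, a tree `T` has pathwidth at most
`k` if and only if `T` contains a path `P` such that `T − V(P)` has pathwidth
at most `k − 1`. -/
theorem stmt3 {V : Type*} (T : SimpleGraph V) (hT : T.IsTree) (k : ℕ) (hk : 1 ≤ k) :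
    PWle T k ↔
      ∃ (u v : V) (p : T.Walk u v), p.IsPath ∧
        PWleOn T {x : V | x ∉ p.support} (k - 1) := by
  classical
  constructor
  · rintro ⟨n, B, hn, ⟨hd1, hd2, hd3, hd4⟩, hcard⟩
    haveI : Nonempty V := hT.isConnected.nonempty
    set S : Finset (Fin n) := Finset.univ.filter (fun i : Fin n => (B i).Nonempty) with hSdef
    have hS : S.Nonempty := by
      obtain ⟨i, hi⟩ := hd3 (Classical.arbitrary V) (Set.mem_univ _)
      exact ⟨i, Finset.mem_filter.mpr ⟨Finset.mem_univ _, ⟨_, hi⟩⟩⟩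
    obtain ⟨ua, hua⟩ : (B (S.min' hS)).Nonempty := (Finset.mem_filter.mp (S.min'_mem hS)).2
    obtain ⟨ub, hub⟩ : (B (S.max' hS)).Nonempty := (Finset.mem_filter.mp (S.max'_mem hS)).2
    refine (hT.isConnected.preconnected ua ub).elim fun w0 => ?_
    refine ⟨ua, ub, (w0.toPath : T.Walk ua ub), (w0.toPath).prop, ?_⟩
    refine ⟨n, fun i => (B i).filter
      (fun x => x ∉ (w0.toPath : T.Walk ua ub).support), hn, ⟨?_, ?_, ?_, ?_⟩, ?_⟩
    · intro i x hx
      rw [Finset.mem_coe, Finset.mem_filter] at hx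
      exact hx.2
    · intro x y hxy hx hy
      obtain ⟨i, h1, h2⟩ := hd2 hxy (Set.mem_univ _) (Set.mem_univ _)
      exact ⟨i, Finset.mem_filter.mpr ⟨h1, hx⟩, Finset.mem_filter.mpr ⟨h2, hy⟩⟩
    · intro x hx
      obtain ⟨i, hi⟩ := hd3 x (Set.mem_univ _)
      exact ⟨i, Finset.mem_filter.mpr ⟨hi, hx⟩⟩
    · intro x i j l hij hjl hxi hxl
      rw [Finset.mem_filter] at hxi hxl ⊢
      exact ⟨hd4 x i j l hij hjl hxi.1 hxl.1, hxi.2⟩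
    · intro i
      show ((B i).filter (fun x => x ∉ (w0.toPath : T.Walk ua ub).support)).card ≤ k - 1 + 1
      by_cases hBi : (B i).Nonempty
      · have hiS : i ∈ S := Finset.mem_filter.mpr ⟨Finset.mem_univ _, hBi⟩
        obtain ⟨z, hz, hzB⟩ := walk_meets_bag hd4
          (fun x y hxy => hd2 hxy (Set.mem_univ _) (Set.mem_univ _)) i
          (w0.toPath : T.Walk ua ub) hua hub (S.min'_le i hiS) (S.le_max' i hiS)
        have hsub : (B i).filter (fun x => x ∉ (w0.toPath : T.Walk ua ub).support) ⊆
            (B i).erase z := by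
          intro x hx
          rw [Finset.mem_filter] at hx
          exact Finset.mem_erase.mpr ⟨fun h => hx.2 (h ▸ hz), hx.1⟩
        have h1 := Finset.card_le_card hsub
        have h2 : ((B i).erase z).card = (B i).card - 1 := Finset.card_erase_of_mem hzB
        have h3 := hcard i
        omega
      · rw [Finset.not_nonempty_iff_eq_empty] at hBi
        rw [hBi, Finset.filter_empty, Finset.card_empty]
        omega
  · rintro ⟨u, v, p, hp, m, C, hm, ⟨hc1, hc2, hc3, hc4⟩, hcardC⟩
    have hcard' : ∀ j, (C j).card ≤ k := by
      intro j; have := hcardC j; omega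
    set L := p.length with hLdef
    set n := (L + 1) * (m + 1) with hndef
    have hidx : ∀ t j : ℕ, t ≤ L → j ≤ m → t * (m + 1) + j < n := by
      intro t j ht hj
      have h1 : t * (m + 1) ≤ L * (m + 1) := Nat.mul_le_mul_right _ ht
      have h2 : n = L * (m + 1) + (m + 1) := by rw [hndef]; ring
      omega
    have hti : ∀ i : Fin n, i.val / (m + 1) ≤ L := by
      intro i
      have h : i.val < (L + 1) * (m + 1) := by rw [← hndef]; exact i.isLt
      have h2 : i.val / (m + 1) < L + 1 := (Nat.div_lt_iff_lt_mul (by omega : 0 < m + 1)).mpr h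
      omega
    have hmodlt : ∀ i : Fin n, i.val % (m + 1) < m + 1 :=
      fun i => Nat.mod_lt _ (Nat.succ_pos m)
    have hieq : ∀ i : Fin n, (i.val / (m + 1)) * (m + 1) + i.val % (m + 1) = i.val := by
      intro i
      have h := Nat.div_add_mod i.val (m + 1)
      have e : (i.val / (m + 1)) * (m + 1) = (m + 1) * (i.val / (m + 1)) := Nat.mul_comm _ _
      omega
    have hmk : ∀ (t j : ℕ), t ≤ L → j ≤ m →
        ∃ i : Fin n, i.val / (m + 1) = t ∧ i.val % (m + 1) = j := by
      intro t j ht hj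
      have e : t * (m + 1) + j = j + t * (m + 1) := by ring
      refine ⟨⟨t * (m + 1) + j, hidx t j ht hj⟩, ?_, ?_⟩
      · show (t * (m + 1) + j) / (m + 1) = t
        rw [e, Nat.add_mul_div_right _ _ (Nat.succ_pos m), Nat.div_eq_of_lt (by omega)]
        omega
      · show (t * (m + 1) + j) % (m + 1) = j
        rw [e, Nat.add_mul_mod_self_right]
        exact Nat.mod_eq_of_lt (by omega)
    set B : Fin n → Finset V := fun i => bag T p C (i.val / (m + 1)) (i.val % (m + 1))
      with hBdef'
    have hBdef : ∀ i, B i = bag T p C (i.val / (m + 1)) (i.val % (m + 1)) := fun i => rfl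
    have hmix : ∀ ⦃x y : V⦄, T.Adj x y → x ∉ p.support → y ∈ p.support →
        ∃ i : Fin n, x ∈ B i ∧ y ∈ B i := by
      intro x y hxy hx hy
      obtain ⟨t, hgt, htL⟩ := Walk.mem_support_iff_exists_getVert.mp hy
      obtain ⟨j, hj⟩ := hc3 x hx
      have hfx : attach T p x = t := attach_adj_getVert hT hp hx htL (by rwa [hgt])
      obtain ⟨i, hi1, hi2⟩ := hmk t j.val htL (le_of_lt j.isLt)
      refine ⟨i, ?_, ?_⟩
      · rw [hBdef, hi1, hi2, mem_bag_not_supp hx]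
        exact ⟨j.isLt, hj, hfx⟩
      · rw [hBdef, hi1, hi2, ← hgt, getVert_mem_bag hc1 hp _ htL htL]
        exact Or.inl rfl
    refine ⟨n, B, by rw [hndef]; positivity, ⟨?_, ?_, ?_, ?_⟩, ?_⟩
    · intro i x _
      trivial
    · intro x y hxy _ _
      by_cases hx : x ∈ p.support <;> by_cases hy : y ∈ p.support
      · have hedge := adj_mem_edges hT.IsAcyclic p hp hxy hx hy
        obtain ⟨t, htL, hcase⟩ := mem_edges_getVert p hedge
        obtain ⟨i, hi1, hi2⟩ := hmk t m (by omega) le_rfl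
        have hbagm : ∀ z : V, (z = p.getVert t ∨ z = p.getVert (t + 1)) →
            z ∈ bag T p C t m := by
          intro z hz
          rw [bag, dif_neg (lt_irrefl m)]
          simpa using hz
        refine ⟨i, ?_, ?_⟩ <;> rw [hBdef, hi1, hi2]
        · rcases hcase with ⟨h1, h2⟩ | ⟨h1, h2⟩
          · exact hbagm x (Or.inl h1.symm)
          · exact hbagm x (Or.inr h2.symm)
        · rcases hcase with ⟨h1, h2⟩ | ⟨h1, h2⟩
          · exact hbagm y (Or.inr h2.symm)
          · exact hbagm y (Or.inl h1.symm)
      · obtain ⟨i, h1, h2⟩ := hmix hxy.symm hy hx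
        exact ⟨i, h2, h1⟩
      · exact hmix hxy hx hy
      · obtain ⟨j, hxj, hyj⟩ := hc2 hxy hx hy
        have hf : attach T p x = attach T p y := attach_adj hT hp hx hy hxy
        have htL : attach T p x ≤ L := attach_le hT hx
        obtain ⟨i, hi1, hi2⟩ := hmk (attach T p x) j.val htL (le_of_lt j.isLt)
        refine ⟨i, ?_, ?_⟩
        · rw [hBdef, hi1, hi2, mem_bag_not_supp hx]
          exact ⟨j.isLt, hxj, rfl⟩
        · rw [hBdef, hi1, hi2, mem_bag_not_supp hy]
          exact ⟨j.isLt, hyj, hf.symm⟩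
    · intro x _
      by_cases hx : x ∈ p.support
      · obtain ⟨t, hgt, htL⟩ := Walk.mem_support_iff_exists_getVert.mp hx
        obtain ⟨i, hi1, hi2⟩ := hmk t 0 htL (by omega)
        refine ⟨i, ?_⟩
        rw [hBdef, hi1, hi2, ← hgt, getVert_mem_bag hc1 hp _ htL htL]
        exact Or.inl rfl
      · obtain ⟨j, hj⟩ := hc3 x hx
        have htL : attach T p x ≤ L := attach_le hT hx
        obtain ⟨i, hi1, hi2⟩ := hmk (attach T p x) j.val htL (le_of_lt j.isLt)
        refine ⟨i, ?_⟩
        rw [hBdef, hi1, hi2, mem_bag_not_supp hx]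
        exact ⟨j.isLt, hj, rfl⟩
    · intro x i j l hij hjl hxi hxl
      rw [hBdef] at hxi hxl
      rw [hBdef]
      have hij' : i.val ≤ j.val := hij
      have hjl' : j.val ≤ l.val := hjl
      have hei := hieq i
      have hej := hieq j
      have hel := hieq l
      by_cases hx : x ∈ p.support
      · obtain ⟨tx, hgt, htxL⟩ := Walk.mem_support_iff_exists_getVert.mp hx
        rw [← hgt] at hxi hxl ⊢
        have hbound : ∀ i' : Fin n,
            p.getVert tx ∈ bag T p C (i'.val / (m + 1)) (i'.val % (m + 1)) →
            tx * (m + 1) ≤ i'.val + 1 ∧ i'.val ≤ tx * (m + 1) + m := by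
          intro i' hmem
          rw [getVert_mem_bag hc1 hp _ htxL (hti i')] at hmem
          have he := hieq i'
          have hml := hmodlt i'
          rcases hmem with h | ⟨hge, h⟩
          · have e2 : tx * (m + 1) = (i'.val / (m + 1)) * (m + 1) := by rw [h]
            omega
          · have e2 : tx * (m + 1) = (i'.val / (m + 1)) * (m + 1) + (m + 1) := by
              rw [h]; ring
            omega
        obtain ⟨hi1, hi2⟩ := hbound i hxi
        obtain ⟨hl1, hl2⟩ := hbound l hxl
        have hdb := div_block (Nat.succ_pos m) (hmodlt j)
          (show tx * (m + 1) ≤ (j.val / (m + 1)) * (m + 1) + j.val % (m + 1) + 1 by omega)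
          (show (j.val / (m + 1)) * (m + 1) + j.val % (m + 1) ≤ tx * (m + 1) + ((m + 1) - 1)
            by omega)
        rw [getVert_mem_bag hc1 hp _ htxL (hti j)]
        rcases hdb with h | ⟨h1, h2⟩
        · exact Or.inl h.symm
        · exact Or.inr ⟨by omega, h1.symm⟩
      · obtain ⟨hjim, hxCi, hfi⟩ := (mem_bag_not_supp hx _ _).mp hxi
        obtain ⟨hjlm, hxCl, hfl⟩ := (mem_bag_not_supp hx _ _).mp hxl
        have h1 : attach T p x * (m + 1) ≤
            (j.val / (m + 1)) * (m + 1) + j.val % (m + 1) + 1 := by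
          have e2 : attach T p x * (m + 1) = (i.val / (m + 1)) * (m + 1) := by rw [hfi]
          omega
        have h2 : (j.val / (m + 1)) * (m + 1) + j.val % (m + 1) ≤
            attach T p x * (m + 1) + ((m + 1) - 1) := by
          have e2 : attach T p x * (m + 1) = (l.val / (m + 1)) * (m + 1) := by rw [hfl]
          omega
        have hdb := div_block (Nat.succ_pos m) (hmodlt j) h1 h2
        have htj : j.val / (m + 1) = attach T p x := by
          rcases hdb with h | ⟨hh1, hh2⟩
          · exact h
          · exfalso
            have e2 : attach T p x * (m + 1) = (j.val / (m + 1)) * (m + 1) + (m + 1) := by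
              rw [← hh1]; ring
            have e3 : attach T p x * (m + 1) = (i.val / (m + 1)) * (m + 1) := by rw [hfi]
            omega
        have hjj : j.val % (m + 1) < m ∧ i.val % (m + 1) ≤ j.val % (m + 1) ∧
            j.val % (m + 1) ≤ l.val % (m + 1) := by
          have e2 : attach T p x * (m + 1) = (i.val / (m + 1)) * (m + 1) := by rw [hfi]
          have e3 : attach T p x * (m + 1) = (l.val / (m + 1)) * (m + 1) := by rw [hfl]
          have e4 : attach T p x * (m + 1) = (j.val / (m + 1)) * (m + 1) := by rw [htj]
          omega
        rw [mem_bag_not_supp hx]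
        refine ⟨hjj.1, ?_, htj.symm⟩
        exact hc4 x ⟨i.val % (m + 1), hjim⟩ ⟨j.val % (m + 1), hjj.1⟩ ⟨l.val % (m + 1), hjlm⟩
          (Fin.mk_le_mk.mpr hjj.2.1) (Fin.mk_le_mk.mpr hjj.2.2) hxCi hxCl
    · intro i
      rw [hBdef]
      exact card_bag_le hk hcard' _ _
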